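/- Let R be an associative unital ring and R[[X]] the ring of formal power series over R. Then: R is clean if and only if R[[X]] is clean; R is an exchange ring if and only if R[[X]] is an exchange ring; and R is uniquely clean if and only if R[[X]] is uniquely clean. -/

import Mathlib

/-- A ring is clean if every element is the sum of an idempotent and a unit. -/
def IsCleanRing (R : Type*) [Ring R] : Prop :=
  ∀ a : R, ∃ e u : R, IsIdempotentElem e ∧ IsUnit u ∧ a = e + u

/-- A ring is uniquely clean if every element is the sum of an idempotent and a
unit in exactly one way. -/
def IsUniquelyCleanRing (R : Type*) [Ring R] : Prop :=
  ∀ a : R, ∃! p : R × R, IsIdempotentElem p.1 ∧ IsUnit p.2 ∧ a = p.1 + p.2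

/-- A ring `R` is an exchange ring if for every `a ∈ R` there exists an idempotent
`e ∈ R` with `e ∈ aR` and `1 - e ∈ (1 - a)R`. -/
def IsExchangeRing (R : Type*) [Ring R] : Prop :=
  ∀ a : R, ∃ e : R, IsIdempotentElem e ∧ (∃ x : R, e = a * x) ∧
    (∃ y : R, 1 - e = (1 - a) * y)

section Aux

open PowerSeries

variable {R : Type*} [Ring R]

/-- `s - 1` is a unit when `s` is square-zero. -/
lemma aux_sq_zero_unit {s : R} (hs : s * s = 0) : IsUnit (s - 1) := by
  refine ⟨⟨s - 1, -(s + 1), ?_, ?_⟩, rfl⟩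
  · have : (s - 1) * (-(s + 1)) = -(s * s) - s + s + 1 := by noncomm_ring
    rw [this, hs]; abel
  · have : (-(s + 1)) * (s - 1) = -(s * s) - s + s + 1 := by noncomm_ring
    rw [this, hs]; abel

/-- In a uniquely clean ring every idempotent is central. -/
lemma aux_uc_central (h : IsUniquelyCleanRing R) {e : R} (he : IsIdempotentElem e) (r : R) :
    e * r = r * e := by
  have he' : e * e = e := he
  have claimA : ∀ s : R, e * s = s → s * e = 0 → s = 0 := by
    intro s hes hse
    have hs2 : s * s = 0 := by
      calc s * s = s * (e * s) := by rw [hes]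
        _ = (s * e) * s := by rw [mul_assoc]
        _ = 0 := by rw [hse, zero_mul]
    have hf : IsIdempotentElem (e + s) := by
      show (e + s) * (e + s) = e + s
      have : (e + s) * (e + s) = e * e + e * s + s * e + s * s := by noncomm_ring
      rw [this, he', hes, hse, hs2]; abel
    obtain ⟨p, _, hup⟩ := h (e + s - 1)
    have h1 : (e + s, (-1 : R)) = p :=
      hup (e + s, -1) ⟨hf, (isUnit_one).neg, sub_eq_add_neg (e + s) 1⟩
    have h2 : (e, s - 1) = p :=
      hup (e, s - 1) ⟨he, aux_sq_zero_unit hs2, by abel⟩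
    have h3 : e + s = e := congrArg Prod.fst (h1.trans h2.symm)
    rwa [add_eq_left] at h3
  have claimB : ∀ t : R, t * e = t → e * t = 0 → t = 0 := by
    intro t hte het
    have ht2 : t * t = 0 := by
      calc t * t = (t * e) * t := by rw [hte]
        _ = t * (e * t) := by rw [mul_assoc]
        _ = 0 := by rw [het, mul_zero]
    have hf : IsIdempotentElem (e + t) := by
      show (e + t) * (e + t) = e + t
      have : (e + t) * (e + t) = e * e + e * t + t * e + t * t := by noncomm_ring
      rw [this, he', hte, het, ht2]; abel
    obtain ⟨p, _, hup⟩ := h (e + t - 1)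
    have h1 : (e + t, (-1 : R)) = p :=
      hup (e + t, -1) ⟨hf, (isUnit_one).neg, sub_eq_add_neg (e + t) 1⟩
    have h2 : (e, t - 1) = p :=
      hup (e, t - 1) ⟨he, aux_sq_zero_unit ht2, by abel⟩
    have h3 : e + t = e := congrArg Prod.fst (h1.trans h2.symm)
    rwa [add_eq_left] at h3
  have hA : e * r * (1 - e) = 0 := by
    refine claimA _ ?_ ?_
    · calc e * (e * r * (1 - e)) = (e * e) * r * (1 - e) := by noncomm_ring
        _ = e * r * (1 - e) := by rw [he']
    · calc e * r * (1 - e) * e = e * r * (e - e * e) := by noncomm_ring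
        _ = 0 := by rw [he', sub_self, mul_zero]
  have hB : (1 - e) * r * e = 0 := by
    refine claimB _ ?_ ?_
    · calc (1 - e) * r * e * e = (1 - e) * r * (e * e) := by rw [mul_assoc]
        _ = (1 - e) * r * e := by rw [he']
    · calc e * ((1 - e) * r * e) = (e - e * e) * r * e := by noncomm_ring
        _ = 0 := by rw [he', sub_self, zero_mul, zero_mul]
  have h1 : e * r = e * r * e := by
    have heq : e * r * (1 - e) = e * r - e * r * e := by noncomm_ring
    rw [heq] at hA
    exact sub_eq_zero.mp hA
  have h2 : r * e = e * r * e := by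
    have heq : (1 - e) * r * e = r * e - e * r * e := by noncomm_ring
    rw [heq] at hB
    exact sub_eq_zero.mp hB
  rw [h1, h2]

/-- If all idempotents of `R` are central, every idempotent power series is constant. -/
lemma aux_idem_const (hcen : ∀ e : R, IsIdempotentElem e → ∀ r : R, e * r = r * e)
    {E : PowerSeries R} (hE : IsIdempotentElem E) :
    E = PowerSeries.C (PowerSeries.constantCoeff E) := by
  set e := PowerSeries.constantCoeff E with he_def
  have he : IsIdempotentElem e := by
    show e * e = e
    rw [he_def, ← map_mul, hE]
  have he' : e * e = e := he
  set D := E - PowerSeries.C e with hD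
  have hE' : E = PowerSeries.C e + D := by rw [hD]; abel
  have hDeq : PowerSeries.C e * D + D * PowerSeries.C e + D * D = D := by
    have h3 : (PowerSeries.C e + D) * (PowerSeries.C e + D) = PowerSeries.C e + D := by
      rw [← hE']; exact hE
    have h4 : PowerSeries.C e * PowerSeries.C e +
        (PowerSeries.C e * D + D * PowerSeries.C e + D * D) =
        (PowerSeries.C e + D) * (PowerSeries.C e + D) := by noncomm_ring
    rw [h3, ← map_mul, he'] at h4
    exact add_left_cancel h4
  have hD0 : D = 0 := by
    ext n
    rw [map_zero]
    induction n using Nat.strong_induction_on with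
    | _ n ih =>
      rcases Nat.eq_zero_or_pos n with hn | hn
      · subst hn
        rw [PowerSeries.coeff_zero_eq_constantCoeff]
        rw [hD, map_sub, PowerSeries.constantCoeff_C, ← he_def, sub_self]
      · have hsq : (PowerSeries.coeff n) (D * D) = 0 := by
          rw [PowerSeries.coeff_mul]
          refine Finset.sum_eq_zero fun p hp => ?_
          replace hp : p.1 + p.2 = n := by simpa using hp
          rcases lt_or_ge p.1 n with h1 | h1
          · rw [ih p.1 h1, zero_mul]
          · have : p.2 < n := by omega
            rw [ih p.2 this, mul_zero]
        have hco := congrArg (PowerSeries.coeff n) hDeq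
        rw [map_add, map_add, PowerSeries.coeff_C_mul, PowerSeries.coeff_mul_C, hsq,
          add_zero] at hco
        have hcomm : e * PowerSeries.coeff n D = PowerSeries.coeff n D * e :=
          hcen e he _
        rw [← hcomm] at hco
        -- hco : e * c + e * c = c
        have h5 := congrArg (fun z => e * z) hco
        simp only [mul_add, ← mul_assoc, he'] at h5
        -- h5 : e * c + e * c = e * c
        have h6 : e * PowerSeries.coeff n D = 0 := add_eq_right.mp h5
        rw [h6, add_zero] at hco
        exact hco.symm
  rw [hE', hD0, add_zero]

/-- Key combination lemma for the exchange property, in an abstract ring. -/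
lemma aux_combine {S : Type*} [Ring S] {E F g : S} (hEg : E * g = E) (hFg : F * g = 0)
    (hu : IsUnit (E + F)) :
    ∃ V : S, IsIdempotentElem (E * V) ∧ (1 : S) - E * V = F * V := by
  obtain ⟨U, hU⟩ := hu
  have hVu : (↑U⁻¹ : S) * (E + F) = 1 := by rw [← hU]; exact U.inv_mul
  have huV : (E + F) * (↑U⁻¹ : S) = 1 := by rw [← hU]; exact U.mul_inv
  have key : (E + F) * g = E := by rw [add_mul, hEg, hFg, add_zero]
  have hEVE : E * (↑U⁻¹ * E) = E := by
    nth_rewrite 2 [← key]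
    rw [← mul_assoc (↑U⁻¹ : S) (E + F) g, hVu, one_mul, hEg]
  have hsum : E * ↑U⁻¹ + F * ↑U⁻¹ = 1 := by rw [← add_mul, huV]
  refine ⟨↑U⁻¹, ?_, ?_⟩
  · show E * ↑U⁻¹ * (E * ↑U⁻¹) = E * ↑U⁻¹
    rw [mul_assoc E (↑U⁻¹ : S) (E * ↑U⁻¹), ← mul_assoc (↑U⁻¹ : S) E ↑U⁻¹,
      ← mul_assoc E ((↑U⁻¹ : S) * E) ↑U⁻¹, hEVE]
  · rw [← hsum, add_sub_cancel_left]

end Aux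

open PowerSeries in
/-- Let `R` be an associative unital ring and `R[[X]]` the ring of formal
power series over `R`.  Then `R` is clean iff `R[[X]]` is clean, `R` is an exchange ring
iff `R[[X]]` is an exchange ring, and `R` is uniquely clean iff `R[[X]]` is uniquely
clean. -/
theorem clean_exchange_uniquelyClean_powerSeries_iff (R : Type*) [Ring R] :
    (IsCleanRing R ↔ IsCleanRing (PowerSeries R)) ∧
    (IsExchangeRing R ↔ IsExchangeRing (PowerSeries R)) ∧
    (IsUniquelyCleanRing R ↔ IsUniquelyCleanRing (PowerSeries R)) := by
  refine ⟨⟨?_, ?_⟩, ⟨?_, ?_⟩, ⟨?_, ?_⟩⟩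
  · -- clean →
    intro h f
    obtain ⟨e, u, he, hu, hsum⟩ := h (constantCoeff f)
    refine ⟨C e, f - C e, ?_, ?_, by abel⟩
    · show C e * C e = C e
      rw [← map_mul, he]
    · rw [PowerSeries.isUnit_iff_constantCoeff, map_sub, constantCoeff_C]
      rw [hsum]
      simpa using hu
  · -- clean ←
    intro h a
    obtain ⟨E, U, hE, hU, hsum⟩ := h (C a)
    refine ⟨constantCoeff E, constantCoeff U, ?_, hU.map _, ?_⟩
    · show _ * _ = _
      rw [← map_mul, hE]
    · have := congrArg (constantCoeff) hsum
      simpa using this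
  · -- exchange →
    intro h f
    obtain ⟨e, he, ⟨x, hx⟩, ⟨y, hy⟩⟩ := h (constantCoeff f)
    set g : PowerSeries R := C e with hg
    have hgg : g * g = g := by rw [hg, ← map_mul, he]
    set E : PowerSeries R := f * (C x * g) with hE
    set F : PowerSeries R := (1 - f) * (C y * (1 - g)) with hF
    clear_value g E F
    have hEg : E * g = E := by
      rw [hE, mul_assoc, mul_assoc, hgg]
    have hFg : F * g = 0 := by
      have h0 : (1 - g) * g = 0 := by rw [sub_mul, one_mul, hgg, sub_self]
      rw [hF, mul_assoc, mul_assoc, h0, mul_zero, mul_zero]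
    have hcE : constantCoeff E = e := by
      rw [hE, map_mul, map_mul, constantCoeff_C, hg, constantCoeff_C, ← mul_assoc, ← hx, he]
    have hcF : constantCoeff F = 1 - e := by
      have h1e : IsIdempotentElem (1 - e) := he.one_sub
      rw [hF, map_mul, map_mul, map_sub, map_one, constantCoeff_C, hg, map_sub, map_one,
        constantCoeff_C, ← mul_assoc, ← hy]
      exact h1e
    have hu : IsUnit (E + F) := by
      rw [PowerSeries.isUnit_iff_constantCoeff, map_add, hcE, hcF]
      simpa using isUnit_one
    obtain ⟨V, hidem, hcompl⟩ := aux_combine hEg hFg hu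
    refine ⟨E * V, hidem, ⟨C x * g * V, ?_⟩, ⟨C y * (1 - g) * V, ?_⟩⟩
    · rw [hE, mul_assoc]
    · rw [hcompl, hF, mul_assoc]
  · -- exchange ←
    intro h a
    obtain ⟨E, hE, ⟨P, hP⟩, ⟨Q, hQ⟩⟩ := h (C a)
    refine ⟨constantCoeff E, ?_, ⟨constantCoeff P, ?_⟩, ⟨constantCoeff Q, ?_⟩⟩
    · show _ * _ = _
      rw [← map_mul, hE]
    · have := congrArg (constantCoeff) hP
      simpa using this
    · have := congrArg (constantCoeff) hQ
      simpa using this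
  · -- uniquely clean →
    intro h f
    have hcen : ∀ e : R, IsIdempotentElem e → ∀ r : R, e * r = r * e :=
      fun e he r => aux_uc_central h he r
    obtain ⟨p, ⟨hp1, hp2, hp3⟩, hpu⟩ := h (constantCoeff f)
    refine ⟨(C p.1, f - C p.1), ⟨?_, ?_, by rw [add_comm, sub_add_cancel]⟩, ?_⟩
    · show C p.1 * C p.1 = C p.1
      rw [← map_mul, hp1]
    · rw [PowerSeries.isUnit_iff_constantCoeff, map_sub, constantCoeff_C, hp3]
      simpa using hp2
    · rintro ⟨E', U'⟩ ⟨hq1, hq2, hq3⟩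
      have hEc : E' = C (constantCoeff E') := aux_idem_const hcen hq1
      have hdec : (constantCoeff E', constantCoeff U') = p := by
        refine hpu _ ⟨?_, ?_, ?_⟩
        · show _ * _ = _
          rw [← map_mul, hq1]
        · exact hq2.map _
        · have := congrArg (constantCoeff) hq3
          simpa using this
      have h1 : constantCoeff E' = p.1 := congrArg Prod.fst hdec
      have hE'eq : E' = C p.1 := by rw [hEc, h1]
      have hU'eq : U' = f - C p.1 := by
        rw [← hE'eq]
        exact eq_sub_of_add_eq' hq3.symm
      rw [Prod.mk.injEq]
      exact ⟨hE'eq, hU'eq⟩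
  · -- uniquely clean ←
    intro h a
    obtain ⟨p, ⟨hp1, hp2, hp3⟩, hpu⟩ := h (C a)
    refine ⟨(constantCoeff p.1, constantCoeff p.2), ⟨?_, hp2.map _, ?_⟩, ?_⟩
    · show _ * _ = _
      rw [← map_mul, hp1]
    · have := congrArg (constantCoeff) hp3
      simpa using this
    · rintro ⟨e, u⟩ ⟨hq1, hq2, hq3⟩
      have hdec : (C e, C u) = p := by
        refine hpu _ ⟨?_, ?_, ?_⟩
        · show C e * C e = C e
          rw [← map_mul, hq1]
        · exact hq2.map (C)
        · show C a = C e + C u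
          rw [hq3, map_add]
      have h1 : C e = p.1 := congrArg Prod.fst hdec
      have h2 : C u = p.2 := congrArg Prod.snd hdec
      rw [Prod.mk.injEq]
      constructor
      · have := congrArg (constantCoeff) h1
        simpa using this
      · have := congrArg (constantCoeff) h2
        simpa using this
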